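/- Let (A_n)_{n∈ℕ} be events with P(A_n) ≤ c·n^{-q} for some c > 0 and q > 1, and let O := ∑_{n=1}^∞ 1(A_n). Then for all 0 < p < q - 2 we have E[O^{p+1}] ≤ c·q·ζ(q-p-1), where ζ denotes the Riemann zeta function. Consequently P(O ≥ k) ≤ k^{-(p+1)}·c·q·ζ(q-p-1) for all k ≥ 1. -/

import Mathlib

open MeasureTheory ProbabilityTheory Set
open scoped ENNReal

-- Lemma A : real induction bound
lemma auxA {p : ℝ} (hp : 0 ≤ p) : ∀ m : ℕ,
    (m : ℝ) ^ (p + 1) ≤ (p + 1) * ∑ i ∈ Finset.range m, ((i : ℝ) + 1) ^ p := by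
  intro m
  induction m with
  | zero => simp [Real.zero_rpow (by positivity : p + 1 ≠ 0)]
  | succ m ih =>
      have hx : (0 : ℝ) < (m : ℝ) + 1 := by positivity
      have hstep : ((m : ℝ) + 1) ^ (p + 1) ≤ (m : ℝ) ^ (p + 1) + (p + 1) * ((m : ℝ) + 1) ^ p := by
        have hs : (-1 : ℝ) ≤ -(1 / ((m : ℝ) + 1)) := by
          rw [neg_le_neg_iff]
          rw [div_le_one hx]; linarith
        have hB := one_add_mul_self_le_rpow_one_add hs (by linarith : (1:ℝ) ≤ p + 1)
        have h1 : (1 : ℝ) + -(1 / ((m : ℝ) + 1)) = (m : ℝ) / ((m : ℝ) + 1) := by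
          field_simp
          ring
        rw [h1] at hB
        have h2 : ((m : ℝ) / ((m : ℝ) + 1)) ^ (p + 1)
            = (m : ℝ) ^ (p + 1) / ((m : ℝ) + 1) ^ (p + 1) :=
          Real.div_rpow (Nat.cast_nonneg m) hx.le (p + 1)
        rw [h2] at hB
        have hxp : (0 : ℝ) < ((m : ℝ) + 1) ^ (p + 1) := Real.rpow_pos_of_pos hx _
        have hB2 := mul_le_mul_of_nonneg_right hB hxp.le
        rw [div_mul_cancel₀ _ (ne_of_gt hxp)] at hB2
        have h3 : ((m : ℝ) + 1) ^ (p + 1) = ((m : ℝ) + 1) ^ p * ((m : ℝ) + 1) := by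
          rw [Real.rpow_add_one (ne_of_gt hx)]
        have hexp : (1 + (p + 1) * -(1 / ((m : ℝ) + 1))) * (((m : ℝ) + 1) ^ p * ((m : ℝ) + 1))
            = ((m : ℝ) + 1) ^ p * ((m : ℝ) + 1) - (p + 1) * ((m : ℝ) + 1) ^ p := by
          field_simp
          ring
        rw [h3] at hB2
        rw [hexp] at hB2
        rw [h3]
        linarith
      rw [Finset.sum_range_succ, mul_add]
      push_cast
      calc ((m : ℝ) + 1) ^ (p + 1) ≤ (m : ℝ) ^ (p + 1) + (p + 1) * ((m : ℝ) + 1) ^ p := hstep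
        _ ≤ (p + 1) * ∑ i ∈ Finset.range m, ((i : ℝ) + 1) ^ p + (p + 1) * ((m : ℝ) + 1) ^ p := by
            linarith

-- Lemma B : counting
lemma auxB {g : ℕ → ℝ≥0∞} (hg : Monotone g) : ∀ (m : ℕ) (s : Finset ℕ), s.card = m →
    ∑ i ∈ Finset.range m, g i ≤ ∑ n ∈ s, g n := by
  intro m
  induction m with
  | zero => simp
  | succ m ih =>
      intro s hcard
      have hne : s.Nonempty := Finset.card_pos.mp (by omega)
      set M := s.max' hne with hM
      have hMs : M ∈ s := s.max'_mem hne
      have hsub : s ⊆ Finset.range (M + 1) := by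
        intro y hy
        simp only [Finset.mem_range]
        exact Nat.lt_succ_of_le (s.le_max' y hy)
      have hcard_le : m + 1 ≤ M + 1 := by
        have := Finset.card_le_card hsub
        simpa [hcard] using this
      have hmM : m ≤ M := by omega
      have herase : (s.erase M).card = m := by
        rw [Finset.card_erase_of_mem hMs, hcard]
        omega
      rw [Finset.sum_range_succ, ← Finset.sum_erase_add s g hMs]
      exact add_le_add (ih _ herase) (hg hmM)

-- Lemma C : pointwise bound
lemma auxC {p : ℝ} (hp : 0 < p) (S : Set ℕ) :
    (∑' n : ℕ, S.indicator (fun _ => (1 : ℝ≥0∞)) n) ^ (p + 1)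
      ≤ ENNReal.ofReal (p + 1) * ∑' n : ℕ, S.indicator (fun n => ((n : ℝ≥0∞) + 1) ^ p) n := by
  have hgmono : Monotone fun n : ℕ => ((n : ℝ≥0∞) + 1) ^ p := by
    intro a b hab
    exact ENNReal.rpow_le_rpow (by exact_mod_cast add_le_add_left (by exact_mod_cast hab) 1) hp.le
  by_cases hS : S.Finite
  · have h1 : (∑' n : ℕ, S.indicator (fun _ => (1 : ℝ≥0∞)) n)
        = ∑ n ∈ hS.toFinset, S.indicator (fun _ => (1 : ℝ≥0∞)) n := by
      refine tsum_eq_sum ?_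
      intro b hb
      exact Set.indicator_of_notMem (by simpa using hb) _
    have h1' : (∑' n : ℕ, S.indicator (fun _ => (1 : ℝ≥0∞)) n) = (hS.toFinset.card : ℝ≥0∞) := by
      rw [h1]
      rw [Finset.sum_congr rfl (fun n hn => Set.indicator_of_mem (by simpa using hn) _)]
      simp
    rw [h1']
    set m := hS.toFinset.card with hm
    -- real bound transported
    have hreal : ((m : ℝ≥0∞)) ^ (p + 1)
        ≤ ENNReal.ofReal (p + 1) * ∑ i ∈ Finset.range m, ((i : ℝ≥0∞) + 1) ^ p := by
      have hA := auxA hp.le m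
      have := ENNReal.ofReal_le_ofReal hA
      rw [ENNReal.ofReal_mul (by positivity)] at this
      rw [ENNReal.ofReal_sum_of_nonneg (fun i _ => by positivity)] at this
      have hterm : ∀ i : ℕ, ENNReal.ofReal (((i : ℝ) + 1) ^ p) = ((i : ℝ≥0∞) + 1) ^ p := by
        intro i
        rw [← ENNReal.ofReal_rpow_of_pos (by positivity : (0:ℝ) < (i : ℝ) + 1)]
        congr 1
        rw [ENNReal.ofReal_add (Nat.cast_nonneg i) zero_le_one, ENNReal.ofReal_natCast,
          ENNReal.ofReal_one]
      have hcast : ENNReal.ofReal ((m : ℝ) ^ (p + 1)) = (m : ℝ≥0∞) ^ (p + 1) := by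
        rw [← ENNReal.ofReal_rpow_of_nonneg (Nat.cast_nonneg m) (by positivity : (0:ℝ) ≤ p + 1),
          ENNReal.ofReal_natCast]
      rw [hcast] at this
      calc (m : ℝ≥0∞) ^ (p + 1) ≤ _ := this
        _ = ENNReal.ofReal (p + 1) * ∑ i ∈ Finset.range m, ((i : ℝ≥0∞) + 1) ^ p := by
            congr 1
            exact Finset.sum_congr rfl fun i _ => hterm i
    refine hreal.trans (mul_le_mul_right ?_ _)
    calc ∑ i ∈ Finset.range m, ((i : ℝ≥0∞) + 1) ^ p
        ≤ ∑ n ∈ hS.toFinset, ((n : ℝ≥0∞) + 1) ^ p := auxB hgmono m hS.toFinset hm.symm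
      _ = ∑ n ∈ hS.toFinset, S.indicator (fun n => ((n : ℝ≥0∞) + 1) ^ p) n := by
          refine Finset.sum_congr rfl fun n hn => ?_
          rw [Set.indicator_of_mem (by simpa using hn)]
      _ ≤ ∑' n : ℕ, S.indicator (fun n => ((n : ℝ≥0∞) + 1) ^ p) n := ENNReal.sum_le_tsum _
  · -- infinite case : RHS is ⊤
    have hinf : (∑' n : ℕ, S.indicator (fun n => ((n : ℝ≥0∞) + 1) ^ p) n) = ⊤ := by
      have hge : ∀ n : ℕ, S.indicator (fun _ => (1 : ℝ≥0∞)) n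
          ≤ S.indicator (fun n => ((n : ℝ≥0∞) + 1) ^ p) n := by
        intro n
        by_cases hn : n ∈ S
        · rw [Set.indicator_of_mem hn, Set.indicator_of_mem hn]
          exact ENNReal.one_le_rpow (le_add_self) hp
        · simp [Set.indicator_of_notMem hn]
      have htop : (∑' n : ℕ, S.indicator (fun _ => (1 : ℝ≥0∞)) n) = ⊤ := by
        rw [← tsum_subtype S fun _ => (1 : ℝ≥0∞)]
        haveI : Infinite S := Set.infinite_coe_iff.mpr hS
        exact ENNReal.tsum_const_eq_top_of_ne_zero one_ne_zero
      exact top_le_iff.mp (htop ▸ ENNReal.tsum_le_tsum hge)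
    rw [hinf, ENNReal.mul_top (by simp [ENNReal.ofReal_eq_zero]; positivity)]
    exact le_top

theorem stmt1 {Ω : Type*} [MeasurableSpace Ω] (P : Measure Ω) [IsProbabilityMeasure P]
    (A : ℕ → Set Ω) (hA : ∀ n, MeasurableSet (A n))
    (c q : ℝ) (hc : 0 < c) (hq : 1 < q)
    (hbound : ∀ n : ℕ, 1 ≤ n → P (A n) ≤ ENNReal.ofReal (c * (n : ℝ) ^ (-q)))
    (p : ℝ) (hp : 0 < p) (hpq : p < q - 2) :
    (∫⁻ ω, (∑' n : ℕ, Set.indicator (A (n + 1)) (fun _ => (1 : ℝ≥0∞)) ω) ^ (p + 1) ∂P)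
        ≤ ENNReal.ofReal (c * q * ∑' n : ℕ, ((n : ℝ) + 1) ^ (-(q - p - 1))) ∧
    ∀ k : ℕ, 1 ≤ k →
      P {ω | (k : ℝ≥0∞) ≤ ∑' n : ℕ, Set.indicator (A (n + 1)) (fun _ => (1 : ℝ≥0∞)) ω}
        ≤ ENNReal.ofReal ((k : ℝ) ^ (-(p + 1)) *
            (c * q * ∑' n : ℕ, ((n : ℝ) + 1) ^ (-(q - p - 1)))) := by
  set T : ℝ := ∑' n : ℕ, ((n : ℝ) + 1) ^ (-(q - p - 1)) with hTdef
  set O : Ω → ℝ≥0∞ := fun ω => ∑' n : ℕ, Set.indicator (A (n + 1)) (fun _ => (1 : ℝ≥0∞)) ω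
    with hOdef
  have hOmeas : Measurable O :=
    Measurable.ennreal_tsum fun n => measurable_const.indicator (hA (n + 1))
  set g : ℕ → ℝ≥0∞ := fun n => ((n : ℝ≥0∞) + 1) ^ p with hgdef
  have hgOf : ∀ n : ℕ, g n = ENNReal.ofReal (((n : ℝ) + 1) ^ p) := by
    intro n
    rw [← ENNReal.ofReal_rpow_of_pos (by positivity : (0:ℝ) < (n : ℝ) + 1)]
    congr 1
    rw [ENNReal.ofReal_add (Nat.cast_nonneg n) zero_le_one, ENNReal.ofReal_natCast,
      ENNReal.ofReal_one]
  -- pointwise bound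
  have hpoint : ∀ ω, O ω ^ (p + 1)
      ≤ ENNReal.ofReal (p + 1) *
        ∑' n : ℕ, g n * Set.indicator (A (n + 1)) (fun _ => (1 : ℝ≥0∞)) ω := by
    intro ω
    have hC := auxC hp {n : ℕ | ω ∈ A (n + 1)}
    have h1 : ∀ n : ℕ, Set.indicator (A (n + 1)) (fun _ => (1 : ℝ≥0∞)) ω
        = Set.indicator {n : ℕ | ω ∈ A (n + 1)} (fun _ => (1 : ℝ≥0∞)) n := by
      intro n
      by_cases hω : ω ∈ A (n + 1) <;>
        simp [Set.indicator_of_mem, Set.indicator_of_notMem, hω]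
    have h2 : ∀ n : ℕ, g n * Set.indicator (A (n + 1)) (fun _ => (1 : ℝ≥0∞)) ω
        = Set.indicator {n : ℕ | ω ∈ A (n + 1)} (fun n => ((n : ℝ≥0∞) + 1) ^ p) n := by
      intro n
      by_cases hω : ω ∈ A (n + 1) <;>
        simp [Set.indicator_of_mem, Set.indicator_of_notMem, hω, hgdef]
    simp only [hOdef]
    rw [tsum_congr h1]
    rw [tsum_congr h2]
    exact hC
  have hsummable : Summable (fun n : ℕ => ((n : ℝ) + 1) ^ (-(q - p - 1))) := by
    have h := Real.summable_nat_rpow.mpr (show -(q - p - 1) < -1 by linarith)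
    have h2 := (summable_nat_add_iff 1).mpr h
    refine h2.congr fun n => ?_
    push_cast
    ring_nf
  -- main integral bound
  have key : (∫⁻ ω, O ω ^ (p + 1) ∂P) ≤ ENNReal.ofReal (c * q * T) := by
    have hmeas_each : ∀ n : ℕ,
        AEMeasurable (fun ω => g n * Set.indicator (A (n + 1)) (fun _ => (1 : ℝ≥0∞)) ω) P :=
      fun n => ((measurable_const.indicator (hA (n + 1))).const_mul _).aemeasurable
    have hmeas_tsum : Measurable
        (fun ω => ∑' n : ℕ, g n * Set.indicator (A (n + 1)) (fun _ => (1 : ℝ≥0∞)) ω) :=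
      Measurable.ennreal_tsum fun n => (measurable_const.indicator (hA (n + 1))).const_mul _
    calc (∫⁻ ω, O ω ^ (p + 1) ∂P)
        ≤ ∫⁻ ω, ENNReal.ofReal (p + 1) *
            ∑' n : ℕ, g n * Set.indicator (A (n + 1)) (fun _ => (1 : ℝ≥0∞)) ω ∂P :=
          lintegral_mono hpoint
      _ = ENNReal.ofReal (p + 1) * ∑' n : ℕ, g n * P (A (n + 1)) := by
          rw [lintegral_const_mul _ hmeas_tsum, lintegral_tsum hmeas_each]
          congr 1
          refine tsum_congr fun n => ?_
          rw [lintegral_const_mul _ (measurable_const.indicator (hA (n + 1))),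
            lintegral_indicator_const (hA (n + 1)), one_mul]
      _ = ∑' n : ℕ, ENNReal.ofReal (p + 1) * (g n * P (A (n + 1))) :=
          ENNReal.tsum_mul_left.symm
      _ ≤ ∑' n : ℕ, ENNReal.ofReal (c * q * ((n : ℝ) + 1) ^ (-(q - p - 1))) := by
          refine ENNReal.tsum_le_tsum fun n => ?_
          have hx : (0:ℝ) < (n : ℝ) + 1 := by positivity
          have hx1 : (1:ℝ) ≤ (n : ℝ) + 1 := by simp
          have hb := hbound (n + 1) (by omega)
          have hb' : P (A (n + 1)) ≤ ENNReal.ofReal (c * ((n : ℝ) + 1) ^ (-q)) := by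
            convert hb using 3
            push_cast
            ring
          calc ENNReal.ofReal (p + 1) * (g n * P (A (n + 1)))
              ≤ ENNReal.ofReal (p + 1) *
                  ENNReal.ofReal (((n : ℝ) + 1) ^ p * (c * ((n : ℝ) + 1) ^ (-q))) := by
                refine mul_le_mul_right ?_ _
                calc g n * P (A (n + 1))
                    ≤ ENNReal.ofReal (((n : ℝ) + 1) ^ p) *
                        ENNReal.ofReal (c * ((n : ℝ) + 1) ^ (-q)) := by
                      rw [← hgOf n]
                      exact mul_le_mul_right hb' _
                  _ = ENNReal.ofReal (((n : ℝ) + 1) ^ p * (c * ((n : ℝ) + 1) ^ (-q))) :=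
                      (ENNReal.ofReal_mul (by positivity : (0:ℝ) ≤ ((n : ℝ) + 1) ^ p)).symm
            _ = ENNReal.ofReal ((p + 1) * (((n : ℝ) + 1) ^ p * (c * ((n : ℝ) + 1) ^ (-q)))) :=
                (ENNReal.ofReal_mul (by positivity : (0:ℝ) ≤ p + 1)).symm
            _ ≤ ENNReal.ofReal (c * q * ((n : ℝ) + 1) ^ (-(q - p - 1))) := by
                refine ENNReal.ofReal_le_ofReal ?_
                have h1 : ((n : ℝ) + 1) ^ p * ((n : ℝ) + 1) ^ (-q) = ((n : ℝ) + 1) ^ (p - q) := by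
                  rw [← Real.rpow_add hx]
                  ring_nf
                have h2 : ((n : ℝ) + 1) ^ (p - q) ≤ ((n : ℝ) + 1) ^ (-(q - p - 1)) :=
                  Real.rpow_le_rpow_of_exponent_le hx1 (by linarith)
                have h3 : (p + 1) * ((n : ℝ) + 1) ^ (p - q) ≤ q * ((n : ℝ) + 1) ^ (-(q - p - 1)) :=
                  mul_le_mul (by linarith) h2 (Real.rpow_nonneg hx.le _) (by linarith)
                have h4 : (p + 1) * (((n : ℝ) + 1) ^ p * (c * ((n : ℝ) + 1) ^ (-q)))
                    = c * ((p + 1) * ((n : ℝ) + 1) ^ (p - q)) := by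
                  rw [← h1]; ring
                rw [h4]
                calc c * ((p + 1) * ((n : ℝ) + 1) ^ (p - q))
                    ≤ c * (q * ((n : ℝ) + 1) ^ (-(q - p - 1))) :=
                      mul_le_mul_of_nonneg_left h3 hc.le
                  _ = c * q * ((n : ℝ) + 1) ^ (-(q - p - 1)) := by ring
      _ = ENNReal.ofReal (c * q * T) := by
          rw [ENNReal.ofReal_mul (by positivity : (0:ℝ) ≤ c * q),
            ENNReal.ofReal_tsum_of_nonneg (fun n => by positivity) hsummable,
            ← ENNReal.tsum_mul_left]
          refine tsum_congr fun n => ?_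
          rw [← ENNReal.ofReal_mul (by positivity : (0:ℝ) ≤ c * q)]
  refine ⟨key, ?_⟩
  -- Markov part
  intro k hk
  show P {ω | (k : ℝ≥0∞) ≤ O ω} ≤ _
  have hkpos : (0:ℝ) < (k : ℝ) := by exact_mod_cast hk
  have hpos : (0:ℝ) < p + 1 := by linarith
  have hOp : Measurable fun ω => O ω ^ (p + 1) := hOmeas.pow_const _
  have hset : {ω | (k : ℝ≥0∞) ≤ O ω} = {ω | (k : ℝ≥0∞) ^ (p + 1) ≤ O ω ^ (p + 1)} := by
    ext ω
    simp [ENNReal.rpow_le_rpow_iff hpos]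
  have hmark := mul_meas_ge_le_lintegral₀ (μ := P) hOp.aemeasurable ((k : ℝ≥0∞) ^ (p + 1))
  have hkne : (k : ℝ≥0∞) ≠ 0 := Nat.cast_ne_zero.mpr (by omega)
  have hk0 : ((k : ℝ≥0∞)) ^ (p + 1) ≠ 0 := by
    simp [ENNReal.rpow_eq_zero_iff, hkne, ENNReal.natCast_ne_top]
  have hktop : ((k : ℝ≥0∞)) ^ (p + 1) ≠ ⊤ := by
    refine ENNReal.rpow_ne_top_of_nonneg hpos.le (ENNReal.natCast_ne_top k)
  have hP : P {ω | (k : ℝ≥0∞) ≤ O ω}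
      ≤ ((k : ℝ≥0∞)) ^ (-(p + 1)) * ∫⁻ ω, O ω ^ (p + 1) ∂P := by
    rw [hset, ENNReal.rpow_neg]
    rw [← ENNReal.div_eq_inv_mul]
    rw [ENNReal.le_div_iff_mul_le (Or.inl hk0) (Or.inl hktop)]
    rw [mul_comm]
    exact hmark
  refine hP.trans ?_
  have hcoe : ((k : ℝ≥0∞)) ^ (-(p + 1)) = ENNReal.ofReal ((k : ℝ) ^ (-(p + 1))) := by
    rw [← ENNReal.ofReal_rpow_of_pos hkpos, ENNReal.ofReal_natCast]
  rw [hcoe, ENNReal.ofReal_mul (by positivity : (0:ℝ) ≤ (k : ℝ) ^ (-(p + 1)))]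
  exact mul_le_mul_right key _
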